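/- For n ≥ 5, the automaton ℋ_n is synchronizing, the word b (a b^{n-2})^{n-3} a b of length n² - 4n + 6 is a reset word, and the reset threshold of ℋ_n is exactly n² - 4n + 6. -/

import Mathlib

/-- The state reached from `q` by reading the word `w`. -/
def run {Q A : Type*} (δ : Q → A → Q) (q : Q) (w : List A) : Q := w.foldl δ q

/-- The automaton `ℋ_n` on states `0,…,n-1` (paper's `1,…,n` shifted by one):
the letter `a` (= `true`) swaps `0` and `n-1` and fixes all other states;
the letter `b` (= `false`) sends `i ↦ i+1` for `i < n-2`, `n-2 ↦ 0`, `n-1 ↦ 2`. -/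
def hAut (n : ℕ) (q : ZMod n) : Bool → ZMod n
  | true =>
      if q.val = 0 then ((n - 1 : ℕ) : ZMod n) else if q.val = n - 1 then 0 else q
  | false =>
      if q.val = n - 2 then 0 else if q.val = n - 1 then 2 else q + 1

/-! ### Basic run lemmas -/

lemma run_nil {Q A : Type*} (δ : Q → A → Q) (q : Q) : run δ q [] = q := rfl

lemma run_cons {Q A : Type*} (δ : Q → A → Q) (q : Q) (x : A) (w : List A) :
    run δ q (x :: w) = run δ (δ q x) w := rfl

lemma run_append {Q A : Type*} (δ : Q → A → Q) (q : Q) (u v : List A) :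
    run δ q (u ++ v) = run δ (run δ q u) v := by
  simp only [run, List.foldl_append]

/-! ### The ℕ-model of the automaton -/

/-- ℕ-model of `hAut` acting on `{0,…,n-1}`. -/
def gstep (n : ℕ) (v : ℕ) : Bool → ℕ
  | true => if v = 0 then n - 1 else if v = n - 1 then 0 else v
  | false => if v = n - 2 then 0 else if v = n - 1 then 2 else v + 1

lemma gstep_lt (n : ℕ) (hn : 5 ≤ n) (v : ℕ) (hv : v < n) (x : Bool) :
    gstep n v x < n := by
  cases x <;> simp only [gstep] <;> split_ifs <;> omega

lemma hAut_cast (n : ℕ) (hn : 5 ≤ n) (v : ℕ) (hv : v < n) (x : Bool) :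
    hAut n ((v : ℕ) : ZMod n) x = ((gstep n v x : ℕ) : ZMod n) := by
  have hval : ((v : ℕ) : ZMod n).val = v := ZMod.val_cast_of_lt hv
  cases x <;> simp only [hAut, gstep, hval] <;> split_ifs <;>
    first
      | rfl
      | (push_cast; ring)

lemma run_eq_grun (n : ℕ) (hn : 5 ≤ n) (w : List Bool) :
    ∀ v : ℕ, v < n →
      run (hAut n) ((v : ℕ) : ZMod n) w = ((run (gstep n) v w : ℕ) : ZMod n) := by
  induction w with
  | nil => intro v hv; rfl
  | cons x w ih =>
    intro v hv
    rw [run_cons, run_cons, hAut_cast n hn v hv x]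
    exact ih _ (gstep_lt n hn v hv x)

lemma grun_replicate_false (n : ℕ) (hn : 5 ≤ n) :
    ∀ (k v : ℕ), v < n - 1 →
      run (gstep n) v (List.replicate k false) = (v + k) % (n - 1) := by
  intro k
  induction k with
  | zero =>
    intro v hv
    simp only [List.replicate_zero, run_nil, Nat.add_zero]
    exact (Nat.mod_eq_of_lt hv).symm
  | succ k ih =>
    intro v hv
    rw [List.replicate_succ, run_cons]
    by_cases h2 : v = n - 2
    · subst h2
      have hg : gstep n (n - 2) false = 0 := by simp [gstep]
      rw [hg, ih 0 (by omega)]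
      have h : n - 2 + (k + 1) = k + (n - 1) := by omega
      rw [h, Nat.add_mod_right]
      simp
    · have hg : gstep n v false = v + 1 := by
        simp only [gstep]
        rw [if_neg h2, if_neg (by omega : ¬ v = n - 1)]
      rw [hg, ih (v + 1) (by omega)]
      congr 1
      omega

lemma grun_block (n : ℕ) (hn : 5 ≤ n) (v : ℕ) (hv : v ≤ n - 2) :
    run (gstep n) v (true :: List.replicate (n - 2) false) = v - 1 := by
  rw [run_cons]
  by_cases h0 : v = 0
  · subst h0
    have hg : gstep n 0 true = n - 1 := by simp [gstep]
    rw [hg]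
    have h3 : n - 2 = (n - 3) + 1 := by omega
    rw [h3, List.replicate_succ, run_cons]
    have hg2 : gstep n (n - 1) false = 2 := by
      simp only [gstep]
      rw [if_neg (by omega : ¬ n - 1 = n - 2)]
      simp
    rw [hg2, grun_replicate_false n hn (n - 3) 2 (by omega)]
    have h : 2 + (n - 3) = n - 1 := by omega
    rw [h, Nat.mod_self]
  · have hg : gstep n v true = v := by
      simp only [gstep]
      rw [if_neg h0, if_neg (by omega : ¬ v = n - 1)]
    rw [hg, grun_replicate_false n hn (n - 2) v (by omega)]
    have h : v + (n - 2) = (v - 1) + 1 * (n - 1) := by omega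
    rw [h, Nat.add_mul_mod_self_right, Nat.mod_eq_of_lt (by omega)]

lemma grun_blocks (n : ℕ) (hn : 5 ≤ n) :
    ∀ (j v : ℕ), v ≤ n - 2 →
      run (gstep n) v
        (List.replicate j (true :: List.replicate (n - 2) false)).flatten = v - j := by
  intro j
  induction j with
  | zero => intro v hv; simp [run_nil]
  | succ j ih =>
    intro v hv
    rw [List.replicate_succ, List.flatten_cons, run_append, grun_block n hn v hv,
      ih (v - 1) (by omega)]
    omega

lemma grun_w (n : ℕ) (hn : 5 ≤ n) (v : ℕ) (hv : v < n) :
    run (gstep n) v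
      (false :: ((List.replicate (n - 3) (true :: List.replicate (n - 2) false)).flatten
        ++ [true, false])) = 2 := by
  rw [run_cons]
  have hv1 : gstep n v false ≤ n - 2 := by
    simp only [gstep]; split_ifs <;> omega
  rw [run_append, grun_blocks n hn (n - 3) _ hv1]
  set v2 := gstep n v false - (n - 3) with hv2def
  have hv2 : v2 ≤ 1 := by omega
  have : run (gstep n) v2 [true, false] = gstep n (gstep n v2 true) false := rfl
  rw [this]
  interval_cases v2
  · have hg : gstep n 0 true = n - 1 := by simp [gstep]
    rw [hg]
    simp only [gstep]
    rw [if_neg (by omega : ¬ n - 1 = n - 2)]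
    simp
  · have hg : gstep n 1 true = 1 := by
      simp only [gstep]
      rw [if_neg (by omega : ¬ (1:ℕ) = 0), if_neg (by omega : ¬ (1:ℕ) = n - 1)]
    rw [hg]
    simp only [gstep]
    rw [if_neg (by omega : ¬ (1:ℕ) = n - 2), if_neg (by omega : ¬ (1:ℕ) = n - 1)]

/-! ### Set runs -/

section SetRun

variable {Q : Type*} [DecidableEq Q]

/-- Image of a set of states under reading a word. -/
def sRun (δ : Q → Bool → Q) (S : Finset Q) (w : List Bool) : Finset Q :=
  w.foldl (fun S x => S.image (fun q => δ q x)) S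

lemma sRun_nil (δ : Q → Bool → Q) (S : Finset Q) : sRun δ S [] = S := rfl

lemma sRun_cons (δ : Q → Bool → Q) (S : Finset Q) (x : Bool) (w : List Bool) :
    sRun δ S (x :: w) = sRun δ (S.image (fun q => δ q x)) w := rfl

lemma sRun_append (δ : Q → Bool → Q) (S : Finset Q) (u v : List Bool) :
    sRun δ S (u ++ v) = sRun δ (sRun δ S u) v := by
  simp only [sRun, List.foldl_append]

lemma sRun_eq_image (δ : Q → Bool → Q) (w : List Bool) :
    ∀ S : Finset Q, sRun δ S w = S.image (fun q => run δ q w) := by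
  induction w with
  | nil => intro S; simp [sRun_nil, run_nil]
  | cons x w ih =>
    intro S
    rw [sRun_cons, ih, Finset.image_image]
    rfl

end SetRun

/-! ### The macro automaton on `ZMod m` -/

/-- Macro automaton: `false` is a rotation, `true` is a rotation in which the
element at `0` additionally jumps over `1` to `2` (possibly merging). -/
def mstep (m : ℕ) (C : Finset (ZMod m)) : Bool → Finset (ZMod m)
  | false => C.image (· + 1)
  | true =>
      if (0 : ZMod m) ∈ C then insert 2 ((C.erase 0).image (· + 1))
      else C.image (· + 1)

def mrun (m : ℕ) (C : Finset (ZMod m)) (u : List Bool) : Finset (ZMod m) :=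
  u.foldl (mstep m) C

/-- Potential function for the lower-bound argument. -/
def pot (m : ℕ) (C : Finset (ZMod m)) (φ : ZMod m) : ℕ :=
  if C.sup (fun q => (φ - q).val) = 0 then 0
  else (C.sup (fun q => (φ - q).val) - 1) * m + (((C.sup (fun q => (φ - q).val) : ℕ) : ZMod m) - φ).val + 2

section Core

variable (m : ℕ) [NeZero m]

lemma val_sub_one (z : ZMod m) (hz : z ≠ 0) : (z - 1).val = z.val - 1 := by
  have h1 : z.val < m := ZMod.val_lt z
  have h0 : z.val ≠ 0 := fun h => hz ((ZMod.val_eq_zero z).mp h)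
  have key : z - 1 = ((z.val - 1 : ℕ) : ZMod m) := by
    rw [Nat.cast_sub (show 1 ≤ z.val by omega), Nat.cast_one,
      ZMod.natCast_rightInverse z]
  rw [key, ZMod.val_cast_of_lt (by omega)]

lemma val_neg_one (hm : 4 ≤ m) : (0 - 1 : ZMod m).val = m - 1 := by
  have key : (0 - 1 : ZMod m) = ((m - 1 : ℕ) : ZMod m) := by
    rw [Nat.cast_sub (show 1 ≤ m by omega), Nat.cast_one, ZMod.natCast_self]
  rw [key, ZMod.val_cast_of_lt (by omega)]

lemma val_neg_two (hm : 4 ≤ m) : (0 - 2 : ZMod m).val = m - 2 := by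
  have key : (0 - 2 : ZMod m) = ((m - 2 : ℕ) : ZMod m) := by
    rw [Nat.cast_sub (show 2 ≤ m by omega), ZMod.natCast_self]
    norm_num
  rw [key, ZMod.val_cast_of_lt (by omega)]

lemma val_inj' (a b : ZMod m) (h : a.val = b.val) : a = b := by
  rw [← ZMod.natCast_rightInverse a, ← ZMod.natCast_rightInverse b, h]

lemma pot_step (hm : 4 ≤ m) (C : Finset (ZMod m)) (hC : C.Nonempty) (φ : ZMod m) (x : Bool) :
    pot m C φ ≤ (cond x 2 1) + pot m (mstep m C x) (φ + 1) := by
  set R := C.sup (fun q => (φ - q).val) with hR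
  by_cases hR0 : R = 0
  · simp only [pot, ← hR, if_pos hR0]
    exact Nat.zero_le _
  have hRlt : R < m := by
    obtain ⟨q, _, hqv⟩ := Finset.exists_mem_eq_sup C hC (fun q => (φ - q).val)
    have := ZMod.val_lt (φ - q)
    omega
  have hRcast : ((R : ℕ) : ZMod m).val = R := ZMod.val_cast_of_lt hRlt
  have hshift : ∀ q : ZMod m, φ + 1 - (q + 1) = φ - q := fun q => by ring
  have himg : (C.image (· + 1)).sup (fun q => (φ + 1 - q).val) = R := by
    rw [Finset.sup_image]
    exact Finset.sup_congr rfl fun q _ => by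
      show (φ + 1 - (q + 1)).val = (φ - q).val
      rw [hshift]
  -- the "no-jump" comparison
  have hA : ∀ C' : Finset (ZMod m), C'.sup (fun q => (φ + 1 - q).val) = R →
      pot m C φ ≤ 1 + pot m C' (φ + 1) := by
    intro C' hsup
    simp only [pot, ← hR, hsup, if_neg hR0]
    by_cases hδ : ((R : ℕ) : ZMod m) - φ = 0
    · rw [hδ]
      simp only [ZMod.val_zero]
      generalize (R - 1) * m = X
      omega
    · have hδ' : ((R : ℕ) : ZMod m) - (φ + 1) = ((R : ℕ) : ZMod m) - φ - 1 := by ring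
      rw [hδ', val_sub_one m _ hδ]
      have : 1 ≤ (((R : ℕ) : ZMod m) - φ).val := by
        have := (ZMod.val_eq_zero (((R : ℕ) : ZMod m) - φ)).not.mpr hδ
        omega
      generalize (R - 1) * m = X
      omega
  cases x with
  | false => exact hA _ himg
  | true =>
    simp only [mstep, Bool.cond_true]
    by_cases h0C : (0 : ZMod m) ∈ C
    · rw [if_pos h0C]
      have hφval : φ.val ≤ R := by
        have := Finset.le_sup (f := fun q => (φ - q).val) h0C
        simpa using this
      have hsupC' : (insert 2 ((C.erase 0).image (· + 1))).sup (fun q => (φ + 1 - q).val)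
          = max ((φ - 1).val) ((C.erase 0).sup (fun q => (φ - q).val)) := by
        rw [Finset.sup_insert, Finset.sup_image]
        have h2 : (φ + 1 - 2) = φ - 1 := by ring
        have h3 : ((C.erase 0).sup ((fun q => (φ + 1 - q).val) ∘ (· + 1)))
            = (C.erase 0).sup (fun q => (φ - q).val) :=
          Finset.sup_congr rfl fun q _ => by
            show (φ + 1 - (q + 1)).val = (φ - q).val
            rw [hshift]
        rw [h2, h3]
      by_cases hφR : φ = ((R : ℕ) : ZMod m)
      · -- the jumping element is the farthest one
        have hφne0 : φ ≠ 0 := by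
          intro h
          rw [h] at hφR
          rw [← hφR] at hRcast
          simp at hRcast
          omega
        have hφv : φ.val = R := by rw [hφR, hRcast]
        have herase : (C.erase 0).sup (fun q => (φ - q).val) ≤ R - 1 := by
          apply Finset.sup_le
          intro q hq
          obtain ⟨hq0, hqC⟩ := Finset.mem_erase.mp hq
          have hle : (φ - q).val ≤ R := Finset.le_sup (f := fun q => (φ - q).val) hqC
          have hne : (φ - q).val ≠ R := by
            intro h
            apply hq0
            have heq : φ - q = φ := val_inj' m _ _ (by rw [h, hφv])
            calc q = φ - (φ - q) := by ring
              _ = φ - φ := by rw [heq]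
              _ = 0 := by ring
          omega
        have hnew : (φ - 1).val = R - 1 := by rw [val_sub_one m φ hφne0, hφv]
        have hsup' : (insert 2 ((C.erase 0).image (· + 1))).sup (fun q => (φ + 1 - q).val)
            = R - 1 := by
          rw [hsupC', hnew]
          exact max_eq_left herase
        have hδ0 : (((R : ℕ) : ZMod m) - φ).val = 0 := by rw [hφR]; simp
        by_cases hR1 : R = 1
        · have hz : R - 1 = 0 := by omega
          simp only [pot, ← hR, hsup', if_neg hR0, hδ0, hz]
          try simp
          try omega
        · -- R ≥ 2
          have hRm1 : R - 1 ≠ 0 := by omega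
          simp only [pot, ← hR, hsup', if_neg hR0, if_neg hRm1, hδ0]
          have hcast1 : ((R - 1 : ℕ) : ZMod m) = ((R : ℕ) : ZMod m) - 1 := by
            rw [Nat.cast_sub (by omega), Nat.cast_one]
          have hδ' : ((R - 1 : ℕ) : ZMod m) - (φ + 1) = 0 - 2 := by
            rw [hcast1, hφR]; ring
          rw [hδ', val_neg_two m hm]
          have hmul : (R - 1) * m = (R - 1 - 1) * m + m := by
            have h : R - 1 = (R - 1 - 1) + 1 := by omega
            conv_lhs => rw [h]
            rw [Nat.add_mul, Nat.one_mul]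
          rw [hmul]
          generalize (R - 1 - 1) * m = X
          omega
      · by_cases hφ0 : φ = 0
        · -- the jumping element is the aimed one; it becomes farthest
          have hnew : (φ - 1).val = m - 1 := by rw [hφ0]; exact val_neg_one m hm
          have hsup' : (insert 2 ((C.erase 0).image (· + 1))).sup (fun q => (φ + 1 - q).val)
              = m - 1 := by
            apply le_antisymm
            · apply Finset.sup_le
              intro q _
              have := ZMod.val_lt (φ + 1 - q)
              omega
            · have h2 : (φ + 1 - 2).val = m - 1 := by
                have : φ + 1 - 2 = φ - 1 := by ring
                rw [this, hnew]
              calc m - 1 = (φ + 1 - 2).val := h2.symm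
                _ ≤ _ := Finset.le_sup (f := fun q => (φ + 1 - q).val)
                    (Finset.mem_insert_self 2 ((C.erase 0).image (· + 1)))
          have hm1ne : m - 1 ≠ 0 := by omega
          simp only [pot, ← hR, hsup', if_neg hR0, if_neg hm1ne]
          have hδ' : ((m - 1 : ℕ) : ZMod m) - (φ + 1) = 0 - 2 := by
            rw [Nat.cast_sub (show 1 ≤ m by omega), Nat.cast_one, ZMod.natCast_self, hφ0]
            ring
          rw [hδ', val_neg_two m hm]
          have hδlt : (((R : ℕ) : ZMod m) - φ).val < m := ZMod.val_lt _
          have hXY : (R - 1) * m ≤ (m - 2) * m := Nat.mul_le_mul_right m (by omega)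
          have h1 : m - 1 - 1 = m - 2 := by omega
          rw [h1]
          generalize hgen1 : (R - 1) * m = X at *
          generalize hgen2 : (m - 2) * m = Y at *
          omega
        · -- the jumping element is neither farthest nor aimed
          obtain ⟨qh, hqhC, hqhv⟩ := Finset.exists_mem_eq_sup C hC (fun q => (φ - q).val)
          rw [← hR] at hqhv
          have hqh0 : qh ≠ 0 := by
            intro h
            apply hφR
            rw [h] at hqhv
            apply val_inj' m φ ((R : ℕ) : ZMod m) _
            rw [hRcast, hqhv]
            simp
          have hsup' : (insert 2 ((C.erase 0).image (· + 1))).sup (fun q => (φ + 1 - q).val)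
              = R := by
            rw [hsupC']
            apply le_antisymm
            · apply max_le
              · have hφvne : φ.val ≠ 0 := fun h => hφ0 ((ZMod.val_eq_zero φ).mp h)
                rw [val_sub_one m φ hφ0]
                omega
              · apply Finset.sup_le
                intro q hq
                exact Finset.le_sup (f := fun q => (φ - q).val) (Finset.mem_of_mem_erase hq)
            · calc R = (φ - qh).val := hqhv
                _ ≤ (C.erase 0).sup (fun q => (φ - q).val) :=
                    Finset.le_sup (f := fun q => (φ - q).val)
                      (Finset.mem_erase.mpr ⟨hqh0, hqhC⟩)
                _ ≤ _ := le_max_right _ _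
          have hδne : ((R : ℕ) : ZMod m) - φ ≠ 0 := by
            intro h
            exact hφR (sub_eq_zero.mp h).symm
          simp only [pot, ← hR, hsup', if_neg hR0]
          have hδ' : ((R : ℕ) : ZMod m) - (φ + 1) = ((R : ℕ) : ZMod m) - φ - 1 := by ring
          rw [hδ', val_sub_one m _ hδne]
          have hδ1 : 1 ≤ (((R : ℕ) : ZMod m) - φ).val := by
            have := (ZMod.val_eq_zero (((R : ℕ) : ZMod m) - φ)).not.mpr hδne
            omega
          generalize (R - 1) * m = X
          omega
    · rw [if_neg h0C]
      calc pot m C φ ≤ 1 + pot m (C.image (· + 1)) (φ + 1) := hA _ himg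
        _ ≤ 2 + pot m (C.image (· + 1)) (φ + 1) := by omega

lemma core (hm : 4 ≤ m) :
    ∀ (u : List Bool) (C : Finset (ZMod m)), C.Nonempty →
      ∀ g : ZMod m, mrun m C u = {g} →
        pot m C (g - (u.length : ℕ)) ≤ u.length + u.count true := by
  intro u
  induction u with
  | nil =>
    intro C _ g hrun
    have hC : C = {g} := hrun
    subst hC
    simp [pot, Finset.sup_singleton]
  | cons x u ih =>
    intro C hC g hrun
    have hstep := pot_step m hm C hC (g - ((x :: u).length : ℕ)) x
    have hφ : g - ((x :: u).length : ℕ) + 1 = g - (u.length : ℕ) := by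
      push_cast [List.length_cons]
      ring
    rw [hφ] at hstep
    have hC' : (mstep m C x).Nonempty := by
      cases x with
      | false => exact hC.image _
      | true =>
        simp only [mstep]
        split_ifs
        · exact ⟨2, Finset.mem_insert_self _ _⟩
        · exact hC.image _
    have hrun' : mrun m (mstep m C x) u = {g} := hrun
    have hih := ih (mstep m C x) hC' g hrun'
    have hmain : pot m C (g - (((x :: u).length : ℕ) : ZMod m)) ≤
        (cond x 2 1) + (u.length + u.count true) := by
      calc pot m C (g - (((x :: u).length : ℕ) : ZMod m))
          ≤ (cond x 2 1) + pot m (mstep m C x) (g - (u.length : ℕ)) := hstep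
        _ ≤ (cond x 2 1) + (u.length + u.count true) := Nat.add_le_add_left hih _
    have harith : (cond x 2 1) + (u.length + u.count true) ≤
        (x :: u).length + (x :: u).count true := by
      cases x <;> simp [List.count_cons] <;> omega
    exact le_trans hmain harith

lemma pot_univ (hm : 4 ≤ m) (φ : ZMod m) :
    (m - 2) * m + 2 ≤ pot m (Finset.univ) φ := by
  have hR : Finset.univ.sup (fun q : ZMod m => (φ - q).val) = m - 1 := by
    apply le_antisymm
    · exact Finset.sup_le fun q _ => by have := ZMod.val_lt (φ - q); omega
    · have h : (φ - (φ + 1)).val = m - 1 := by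
        have h2 : φ - (φ + 1) = 0 - 1 := by ring
        rw [h2]
        exact val_neg_one m hm
      calc m - 1 = (φ - (φ + 1)).val := h.symm
        _ ≤ _ := Finset.le_sup (f := fun q => (φ - q).val) (Finset.mem_univ (φ + 1))
  rw [pot, hR, if_neg (by omega)]
  have h1 : m - 1 - 1 = m - 2 := by omega
  rw [h1]
  exact Nat.add_le_add_right (Nat.le_add_right _ _) 2

end Core

/-! ### Simulation: blocks of `ℋ_n` vs the macro automaton -/

/-- Projection from cycle states of `ℋ_n` to `ZMod (n-1)`. -/
def proj (n : ℕ) (S : Finset (ZMod n)) : Finset (ZMod (n - 1)) :=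
  S.image fun q => ((q.val : ℕ) : ZMod (n - 1))

section SimHelpers

variable (n : ℕ)

lemma val_two' (hn : 5 ≤ n) : (2 : ZMod n).val = 2 := by
  haveI : NeZero n := ⟨by omega⟩
  have h : (2 : ZMod n) = ((2 : ℕ) : ZMod n) := by norm_num
  rw [h, ZMod.val_cast_of_lt (by omega)]

lemma step_b (hn : 5 ≤ n) (r : ZMod n) (hr : r.val < n - 1) :
    (hAut n r false).val < n - 1 ∧
    (((hAut n r false).val : ℕ) : ZMod (n - 1)) = ((r.val : ℕ) : ZMod (n - 1)) + 1 := by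
  haveI : NeZero n := ⟨by omega⟩
  by_cases h2 : r.val = n - 2
  · simp only [hAut, if_pos h2]
    rw [ZMod.val_zero]
    refine ⟨by omega, ?_⟩
    rw [h2, Nat.cast_zero]
    have h3 : ((n - 2 : ℕ) : ZMod (n - 1)) + 1 = ((n - 1 : ℕ) : ZMod (n - 1)) := by
      rw [show n - 1 = (n - 2) + 1 by omega, Nat.cast_add, Nat.cast_one]
    rw [h3, ZMod.natCast_self]
  · simp only [hAut, if_neg h2, if_neg (show ¬ r.val = n - 1 by omega)]
    have hval : (r + 1).val = r.val + 1 := by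
      have h4 : r + 1 = ((r.val + 1 : ℕ) : ZMod n) := by
        rw [Nat.cast_add, Nat.cast_one, ZMod.natCast_rightInverse r]
      rw [h4, ZMod.val_cast_of_lt (by omega)]
    rw [hval]
    exact ⟨by omega, by push_cast; ring⟩

lemma step_a0 (hn : 5 ≤ n) : hAut n 0 true = ((n - 1 : ℕ) : ZMod n) := by
  haveI : NeZero n := ⟨by omega⟩
  simp [hAut]

lemma step_annex (hn : 5 ≤ n) : hAut n ((n - 1 : ℕ) : ZMod n) false = 2 := by
  haveI : NeZero n := ⟨by omega⟩
  simp only [hAut, ZMod.val_cast_of_lt (show n - 1 < n by omega)]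
  rw [if_neg (by omega : ¬ n - 1 = n - 2)]
  simp

lemma step_aid (hn : 5 ≤ n) (r : ZMod n) (hr : r.val < n - 1) (hr0 : r ≠ 0) :
    hAut n r true = r := by
  haveI : NeZero n := ⟨by omega⟩
  have h : r.val ≠ 0 := fun h => hr0 ((ZMod.val_eq_zero r).mp h)
  simp only [hAut]
  rw [if_neg h, if_neg (by omega)]

lemma hAut_true_def (q : ZMod n) :
    hAut n q true =
      if q.val = 0 then ((n - 1 : ℕ) : ZMod n) else if q.val = n - 1 then 0 else q := rfl

lemma ainv (hn : 5 ≤ n) (q : ZMod n) : hAut n (hAut n q true) true = q := by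
  haveI : NeZero n := ⟨by omega⟩
  have hvn : ((n - 1 : ℕ) : ZMod n).val = n - 1 := ZMod.val_cast_of_lt (by omega)
  have e2 : hAut n 0 true = ((n - 1 : ℕ) : ZMod n) := by
    rw [hAut_true_def n 0, if_pos (show (0 : ZMod n).val = 0 from ZMod.val_zero)]
  by_cases h0 : q.val = 0
  · have hq : q = 0 := (ZMod.val_eq_zero q).mp h0
    subst hq
    rw [e2, hAut_true_def n _, hvn, if_neg (by omega), if_pos rfl]
  · by_cases h1 : q.val = n - 1
    · have e1 : hAut n q true = 0 := by
        rw [hAut_true_def n q, if_neg h0, if_pos h1]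
      rw [e1, e2]
      conv_rhs => rw [← ZMod.natCast_rightInverse q]
      rw [h1]
    · have e1 : hAut n q true = q := by
        rw [hAut_true_def n q, if_neg h0, if_neg h1]
      rw [e1, e1]

lemma mem0 (hn : 5 ≤ n) (S : Finset (ZMod n)) (hS : ∀ q ∈ S, q.val < n - 1) :
    (0 : ZMod (n - 1)) ∈ proj n S ↔ (0 : ZMod n) ∈ S := by
  haveI : NeZero n := ⟨by omega⟩
  haveI : NeZero (n - 1) := ⟨by omega⟩
  simp only [proj, Finset.mem_image]
  constructor
  · rintro ⟨q, hq, hcast⟩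
    have hlt := hS q hq
    have h1 : q.val = 0 := by
      have h2 := ZMod.val_cast_of_lt (n := n - 1) hlt
      rw [hcast, ZMod.val_zero] at h2
      omega
    rwa [← (ZMod.val_eq_zero q).mp h1]
  · intro h
    exact ⟨0, h, by rw [ZMod.val_zero, Nat.cast_zero]⟩

lemma erase_proj (hn : 5 ≤ n) (S : Finset (ZMod n)) (hS : ∀ q ∈ S, q.val < n - 1) :
    proj n (S.erase 0) = (proj n S).erase 0 := by
  haveI : NeZero n := ⟨by omega⟩
  haveI : NeZero (n - 1) := ⟨by omega⟩
  ext x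
  simp only [proj, Finset.mem_image, Finset.mem_erase]
  constructor
  · rintro ⟨q, ⟨hq0, hqS⟩, rfl⟩
    refine ⟨?_, q, hqS, rfl⟩
    intro hx
    have hlt := hS q hqS
    have h1 : q.val = 0 := by
      have h2 := ZMod.val_cast_of_lt (n := n - 1) hlt
      rw [hx, ZMod.val_zero] at h2
      omega
    exact hq0 ((ZMod.val_eq_zero q).mp h1)
  · rintro ⟨hx0, q, hqS, rfl⟩
    refine ⟨q, ⟨?_, hqS⟩, rfl⟩
    rintro rfl
    exact hx0 (by rw [ZMod.val_zero, Nat.cast_zero])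

end SimHelpers


section Sim

variable (n : ℕ)

lemma blk_b (hn : 5 ≤ n) (S : Finset (ZMod n)) (hS : ∀ q ∈ S, q.val < n - 1) :
    (∀ q ∈ S.image (fun q => hAut n q false), q.val < n - 1) ∧
    proj n (S.image (fun q => hAut n q false)) = mstep (n - 1) (proj n S) false := by
  constructor
  · intro q hq
    obtain ⟨r, hr, rfl⟩ := Finset.mem_image.mp hq
    exact (step_b n hn r (hS r hr)).1
  · show proj n (S.image (fun q => hAut n q false)) = (proj n S).image (· + 1)
    simp only [proj]
    rw [Finset.image_image, Finset.image_image]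
    exact Finset.image_congr fun r hr => (step_b n hn r (hS r hr)).2

lemma blk_c (hn : 5 ≤ n) (S : Finset (ZMod n)) (hS : ∀ q ∈ S, q.val < n - 1) :
    (∀ q ∈ (S.image (fun q => hAut n q true)).image (fun q => hAut n q false),
        q.val < n - 1) ∧
    proj n ((S.image (fun q => hAut n q true)).image (fun q => hAut n q false)) =
      mstep (n - 1) (proj n S) true := by
  haveI : NeZero n := ⟨by omega⟩
  haveI : NeZero (n - 1) := ⟨by omega⟩
  have himg : (S.image (fun q => hAut n q true)).image (fun q => hAut n q false)
      = S.image (fun q => hAut n (hAut n q true) false) := Finset.image_image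
  have hF0 : hAut n (hAut n 0 true) false = (2 : ZMod n) := by
    rw [step_a0 n hn, step_annex n hn]
  constructor
  · intro q hq
    rw [himg] at hq
    obtain ⟨r, hr, rfl⟩ := Finset.mem_image.mp hq
    by_cases hr0 : r = 0
    · subst hr0
      rw [hF0, val_two' n hn]
      omega
    · rw [step_aid n hn r (hS r hr) hr0]
      exact (step_b n hn r (hS r hr)).1
  · rw [himg]
    by_cases h0 : (0 : ZMod n) ∈ S
    · have hms : mstep (n - 1) (proj n S) true
          = insert 2 (((proj n S).erase 0).image (· + 1)) := by
        simp only [mstep]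
        rw [if_pos ((mem0 n hn S hS).mpr h0)]
      rw [hms]
      have hdec : S = insert 0 (S.erase 0) := (Finset.insert_erase h0).symm
      conv_lhs => rw [hdec]
      rw [Finset.image_insert]
      simp only [proj]
      rw [Finset.image_insert, hF0]
      have h2 : (((2 : ZMod n).val : ℕ) : ZMod (n - 1)) = 2 := by
        rw [val_two' n hn]
        norm_num
      rw [h2]
      congr 1
      have hrest : (S.erase 0).image (fun q => hAut n (hAut n q true) false)
          = (S.erase 0).image (fun q => hAut n q false) :=
        Finset.image_congr fun r hr => by
          have hr' := Finset.mem_erase.mp hr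
          rw [step_aid n hn r (hS r hr'.2) hr'.1]
      rw [hrest]
      have hblk := (blk_b n hn (S.erase 0)
        (fun q hq => hS q (Finset.mem_of_mem_erase hq))).2
      simp only [proj] at hblk
      rw [hblk]
      show mstep (n - 1) ((S.erase 0).image (fun q => ((q.val : ℕ) : ZMod (n - 1)))) false
          = _
      have herase := erase_proj n hn S hS
      simp only [proj] at herase
      rw [show mstep (n - 1) ((S.erase 0).image (fun q => ((q.val : ℕ) : ZMod (n - 1)))) false
          = ((S.erase 0).image (fun q => ((q.val : ℕ) : ZMod (n - 1)))).image (· + 1) from rfl,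
        herase]
    · have hms : mstep (n - 1) (proj n S) true = (proj n S).image (· + 1) := by
        simp only [mstep]
        rw [if_neg (fun hc => h0 ((mem0 n hn S hS).mp hc))]
      rw [hms]
      simp only [proj]
      rw [Finset.image_image, Finset.image_image]
      apply Finset.image_congr
      intro r hr
      have hr0 : r ≠ 0 := fun h => h0 (h ▸ hr)
      show (((hAut n (hAut n r true) false).val : ℕ) : ZMod (n - 1)) = _
      rw [step_aid n hn r (hS r hr) hr0]
      exact (step_b n hn r (hS r hr)).2

lemma sim (hn : 5 ≤ n) :
    ∀ (bls : List (List Bool)), (∀ bl ∈ bls, bl = [false] ∨ bl = [true, false]) →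
      ∀ S : Finset (ZMod n), (∀ q ∈ S, q.val < n - 1) →
        (∀ q ∈ sRun (hAut n) S bls.flatten, q.val < n - 1) ∧
        proj n (sRun (hAut n) S bls.flatten) =
          mrun (n - 1) (proj n S) (bls.map (fun bl => bl.length == 2)) := by
  intro bls
  induction bls with
  | nil => exact fun _ S hS => ⟨hS, rfl⟩
  | cons bl bls ih =>
    intro hval S hS
    have hbl := hval bl List.mem_cons_self
    have hrest : ∀ b ∈ bls, b = [false] ∨ b = [true, false] :=
      fun b hb => hval b (List.mem_cons_of_mem _ hb)
    rw [List.flatten_cons, sRun_append]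
    rcases hbl with h | h <;> subst h
    · have hb := blk_b n hn S hS
      have hS' : ∀ q ∈ sRun (hAut n) S [false], q.val < n - 1 := hb.1
      obtain ⟨h1, h2⟩ := ih hrest (sRun (hAut n) S [false]) hS'
      refine ⟨h1, ?_⟩
      rw [h2]
      have hpr : proj n (sRun (hAut n) S [false]) = mstep (n - 1) (proj n S) false := hb.2
      rw [hpr]
      rfl
    · have hb := blk_c n hn S hS
      have hS' : ∀ q ∈ sRun (hAut n) S [true, false], q.val < n - 1 := hb.1
      obtain ⟨h1, h2⟩ := ih hrest (sRun (hAut n) S [true, false]) hS'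
      refine ⟨h1, ?_⟩
      rw [h2]
      have hpr : proj n (sRun (hAut n) S [true, false]) = mstep (n - 1) (proj n S) true :=
        hb.2
      rw [hpr]
      rfl

end Sim

/-! ### Word normalization -/

lemma parse_aux :
    ∀ (N : ℕ) (v : List Bool), v.length ≤ N → v.head? ≠ some true →
      v.getLast? ≠ some true →
      (∃ x y, v = x ++ true :: true :: y) ∨
      (∃ bls : List (List Bool), (∀ bl ∈ bls, bl = [false] ∨ bl = [true, false]) ∧
        v = bls.flatten) := by
  intro N
  induction N with
  | zero =>
    intro v hlen _ _
    have hv : v = [] := by cases v <;> simp_all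
    exact Or.inr ⟨[], by simp, hv⟩
  | succ N IH =>
    intro v hlen hhead hlast
    rcases v with _ | ⟨x, rest⟩
    · exact Or.inr ⟨[], by simp, rfl⟩
    cases x
    case true => exact absurd rfl hhead
    case false =>
    rcases rest with _ | ⟨y, rest2⟩
    · exact Or.inr ⟨[[false]], by simp, rfl⟩
    cases y
    case false =>
      have hlast' : (false :: rest2).getLast? ≠ some true := by
        rwa [List.getLast?_cons_cons] at hlast
      have hh : (false :: rest2).head? ≠ some true := by simp
      have hlen' : (false :: rest2).length ≤ N := by
        simp only [List.length_cons] at hlen ⊢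
        omega
      rcases IH _ hlen' hh hlast' with ⟨x, y, heq⟩ | ⟨bls, hb, heq⟩
      · exact Or.inl ⟨false :: x, y, by rw [heq]; rfl⟩
      · refine Or.inr ⟨[false] :: bls, ?_, ?_⟩
        · intro b hb'
          rcases List.mem_cons.mp hb' with h | h
          · exact Or.inl h
          · exact hb b h
        · simp only [List.flatten_cons, List.singleton_append]
          rw [← heq]
    case true =>
      rcases rest2 with _ | ⟨z, r3⟩
      · exact absurd (by decide) hlast
      cases z
      case true => exact Or.inl ⟨[false], r3, rfl⟩
      case false =>
        have hh : (false :: r3).head? ≠ some true := by simp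
        have hlast' : (false :: r3).getLast? ≠ some true := by
          rw [List.getLast?_cons_cons, List.getLast?_cons_cons] at hlast
          exact hlast
        have hlen' : (false :: r3).length ≤ N := by
          simp only [List.length_cons] at hlen ⊢
          omega
        rcases IH _ hlen' hh hlast' with ⟨x, y, heq⟩ | ⟨bls, hb, heq⟩
        · exact Or.inl ⟨false :: true :: x, y, by rw [heq]; rfl⟩
        · rcases bls with _ | ⟨b1, bls'⟩
          · simp at heq
          · rcases hb b1 List.mem_cons_self with h1 | h1 <;> subst h1
            · have hr3 : r3 = bls'.flatten := by simpa using heq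
              refine Or.inr ⟨[false] :: [true, false] :: bls', ?_, ?_⟩
              · intro b hb'
                rcases List.mem_cons.mp hb' with h | h
                · exact Or.inl h
                rcases List.mem_cons.mp h with h' | h'
                · exact Or.inr h'
                · exact hb b (List.mem_cons_of_mem _ h')
              · simp [hr3]
            · simp at heq

lemma parse :
    ∀ v : List Bool, v.head? ≠ some true → v.getLast? ≠ some true →
      (∃ x y, v = x ++ true :: true :: y) ∨
      (∃ bls : List (List Bool), (∀ bl ∈ bls, bl = [false] ∨ bl = [true, false]) ∧
        v = bls.flatten) :=
  fun v => parse_aux v.length v le_rfl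

lemma flatten_length (bls : List (List Bool))
    (hbl : ∀ bl ∈ bls, bl = [false] ∨ bl = [true, false]) :
    bls.flatten.length =
      (bls.map (fun bl => bl.length == 2)).length +
        (bls.map (fun bl => bl.length == 2)).count true := by
  induction bls with
  | nil => rfl
  | cons bl bls ih =>
    have hrest : ∀ b ∈ bls, b = [false] ∨ b = [true, false] :=
      fun b hb => hbl b (List.mem_cons_of_mem _ hb)
    have h := ih hrest
    rcases hbl bl List.mem_cons_self with hb | hb <;> subst hb <;>
      simp only [List.flatten_cons, List.length_append, List.map_cons, List.length_cons,
        List.count_cons, h] <;> simp <;> omega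

lemma lower_bound (n : ℕ) [NeZero n] (hn : 5 ≤ n) :
    ∀ (v : List Bool) (p : ZMod n), sRun (hAut n) Finset.univ v = {p} →
      n ^ 2 - 4 * n + 6 ≤ v.length := by
  haveI : NeZero (n - 1) := ⟨by omega⟩
  suffices H : ∀ (N : ℕ) (v : List Bool), v.length ≤ N → ∀ p : ZMod n,
      sRun (hAut n) Finset.univ v = {p} → n ^ 2 - 4 * n + 6 ≤ v.length by
    intro v p h
    exact H v.length v le_rfl p h
  have hcard_univ : ∀ p : ZMod n, (Finset.univ : Finset (ZMod n)) ≠ {p} := by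
    intro p h
    have hcard := congrArg Finset.card h
    rw [Finset.card_univ, Finset.card_singleton] at hcard
    have : Fintype.card (ZMod n) = n := ZMod.card n
    omega
  have hinv2 : ∀ T : Finset (ZMod n),
      (T.image (fun q => hAut n q true)).image (fun q => hAut n q true) = T := by
    intro T
    rw [Finset.image_image]
    calc T.image ((fun q => hAut n q true) ∘ (fun q => hAut n q true))
        = T.image id := Finset.image_congr fun q _ => ainv n hn q
      _ = T := Finset.image_id
  intro N
  induction N with
  | zero =>
    intro v hlen p hrun
    have hv : v = [] := by cases v <;> simp_all
    subst hv
    rw [sRun_nil] at hrun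
    exact absurd hrun (hcard_univ p)
  | succ N IH =>
    intro v hlen p hrun
    by_cases hhead : v.head? = some true
    · rcases v with _ | ⟨x, v'⟩
      · simp at hhead
      · have hx : x = true := by simpa using hhead
        subst hx
        have haimg : (Finset.univ : Finset (ZMod n)).image (fun q => hAut n q true)
            = Finset.univ := by
          apply Finset.eq_univ_iff_forall.mpr
          intro y
          exact Finset.mem_image.mpr ⟨hAut n y true, Finset.mem_univ _, ainv n hn y⟩
        have hrun' : sRun (hAut n) Finset.univ v' = {p} := by
          rw [sRun_cons, haimg] at hrun
          exact hrun
        have hle := IH v' (by simp only [List.length_cons] at hlen; omega) p hrun'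
        simp only [List.length_cons]
        omega
    · by_cases hlast : v.getLast? = some true
      · have hne : v ≠ [] := by
          intro h
          rw [h] at hlast
          simp at hlast
        have hsplit : v.dropLast ++ [v.getLast hne] = v := List.dropLast_append_getLast hne
        have hgl : v.getLast hne = true := by
          rw [List.getLast?_eq_getLast hne] at hlast
          exact Option.some_injective _ hlast
        have hrun2 : sRun (hAut n) Finset.univ v.dropLast = {hAut n p true} := by
          have h1 : sRun (hAut n) Finset.univ v
              = (sRun (hAut n) Finset.univ v.dropLast).image (fun q => hAut n q true) := by
            conv_lhs => rw [← hsplit]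
            rw [sRun_append, hgl]
            rfl
          rw [h1] at hrun
          have h2 := congrArg (fun T => T.image (fun q => hAut n q true)) hrun
          simp only [hinv2] at h2
          rw [h2, Finset.image_singleton]
        have hlv : v.dropLast.length = v.length - 1 := List.length_dropLast
        have hpos : 0 < v.length := List.length_pos_iff.mpr hne
        have hle := IH v.dropLast (by omega) _ hrun2
        omega
      · rcases parse v hhead hlast with ⟨x, y, heq⟩ | ⟨bls, hbls, heq⟩
        · subst heq
          have hrun' : sRun (hAut n) Finset.univ (x ++ y) = {p} := by
            rw [sRun_append] at hrun ⊢
            rw [sRun_cons, sRun_cons, hinv2] at hrun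
            exact hrun
          have hlen' : (x ++ y).length ≤ N := by
            simp only [List.length_append, List.length_cons] at hlen ⊢
            omega
          have hle := IH _ hlen' _ hrun'
          simp only [List.length_append, List.length_cons] at hle ⊢
          omega
        · rcases bls with _ | ⟨b1, bls'⟩
          · have hv : v = [] := by simpa using heq
            subst hv
            rw [sRun_nil] at hrun
            exact absurd hrun (hcard_univ p)
          rcases hbls b1 List.mem_cons_self with h1 | h1
          · -- b1 = [false] : the real case
            subst h1
            have hveq : v = false :: bls'.flatten := by simpa using heq
            have hbls' : ∀ bl ∈ bls', bl = [false] ∨ bl = [true, false] :=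
              fun bl hb => hbls bl (List.mem_cons_of_mem _ hb)
            have hS1lt : ∀ q ∈ (Finset.univ : Finset (ZMod n)).image
                (fun q => hAut n q false), q.val < n - 1 := by
              intro q hq
              obtain ⟨r, _, rfl⟩ := Finset.mem_image.mp hq
              by_cases hr : r.val < n - 1
              · exact (step_b n hn r hr).1
              · have hrv : r.val = n - 1 := by
                  have := ZMod.val_lt r
                  omega
                have hr2 : hAut n r false = 2 := by
                  have hre : r = ((n - 1 : ℕ) : ZMod n) := by
                    conv_lhs => rw [← ZMod.natCast_rightInverse r]
                    rw [hrv]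
                  rw [hre]
                  exact step_annex n hn
                rw [hr2, val_two' n hn]
                omega
            have hproj1 : proj n ((Finset.univ : Finset (ZMod n)).image
                (fun q => hAut n q false)) = Finset.univ := by
              apply Finset.eq_univ_iff_forall.mpr
              intro yv
              have hyvlt : yv.val < n - 1 := ZMod.val_lt yv
              simp only [proj, Finset.mem_image]
              by_cases h0 : yv.val = 0
              · have hyv0 : yv = 0 := (ZMod.val_eq_zero yv).mp h0
                refine ⟨hAut n ((n - 2 : ℕ) : ZMod n) false,
                  ⟨((n - 2 : ℕ) : ZMod n), Finset.mem_univ _, rfl⟩, ?_⟩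
                have hv2 : ((n - 2 : ℕ) : ZMod n).val = n - 2 :=
                  ZMod.val_cast_of_lt (by omega)
                have : hAut n ((n - 2 : ℕ) : ZMod n) false = 0 := by
                  show (if _ = n - 2 then (0 : ZMod n) else _) = 0
                  rw [if_pos hv2]
                rw [this, ZMod.val_zero, Nat.cast_zero, hyv0]
              · refine ⟨hAut n ((yv.val - 1 : ℕ) : ZMod n) false,
                  ⟨((yv.val - 1 : ℕ) : ZMod n), Finset.mem_univ _, rfl⟩, ?_⟩
                have hvr : ((yv.val - 1 : ℕ) : ZMod n).val = yv.val - 1 :=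
                  ZMod.val_cast_of_lt (by omega)
                have hstep := (step_b n hn ((yv.val - 1 : ℕ) : ZMod n)
                  (by rw [hvr]; omega)).2
                rw [hstep, hvr]
                rw [show ((yv.val - 1 : ℕ) : ZMod (n - 1)) + 1
                    = ((yv.val - 1 + 1 : ℕ) : ZMod (n - 1)) by push_cast; ring]
                rw [show yv.val - 1 + 1 = yv.val by omega]
                exact ZMod.natCast_rightInverse yv
            obtain ⟨hlt_end, hproj_end⟩ := sim n hn bls' hbls'
              ((Finset.univ : Finset (ZMod n)).image (fun q => hAut n q false)) hS1lt
            have hrun1 : sRun (hAut n) ((Finset.univ : Finset (ZMod n)).image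
                (fun q => hAut n q false)) bls'.flatten = {p} := by
              rw [hveq, sRun_cons] at hrun
              exact hrun
            rw [hrun1, hproj1] at hproj_end
            have hmrun : mrun (n - 1) Finset.univ (bls'.map (fun bl => bl.length == 2))
                = {((p.val : ℕ) : ZMod (n - 1))} := by
              rw [← hproj_end]
              simp [proj]
            have hcore := core (n - 1) (by omega)
              (bls'.map (fun bl => bl.length == 2)) Finset.univ
              ⟨0, Finset.mem_univ 0⟩ _ hmrun
            have hpotu := pot_univ (n - 1) (by omega)
              (((p.val : ℕ) : ZMod (n - 1)) -
                (((bls'.map (fun bl => bl.length == 2)).length : ℕ) : ZMod (n - 1)))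
            have hbound := le_trans hpotu hcore
            have hflat := flatten_length bls' hbls'
            have hlenv : v.length = 1 + bls'.flatten.length := by
              rw [hveq, List.length_cons]
              omega
            obtain ⟨k, rfl⟩ : ∃ k, n = k + 5 := ⟨n - 5, by omega⟩
            have he1 : k + 5 - 1 - 2 = k + 2 := by omega
            have he2 : k + 5 - 1 = k + 4 := by omega
            rw [he1, he2] at hbound
            have he3 : (k + 2) * (k + 4) = k * k + 6 * k + 8 := by ring
            have he4 : (k + 5) ^ 2 = k * k + 10 * k + 25 := by ring
            rw [he3] at hbound
            rw [he4]
            omega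
          · -- b1 = [true, false] : contradicts head? ≠ some true
            subst h1
            rw [heq] at hhead
            simp at hhead

/-- For `n ≥ 5`, the automaton `ℋ_n` is synchronizing, the word `b (a b^{n-2})^{n-3} a b`
of length `n² - 4n + 6` is a reset word for it, and its reset threshold is exactly
`n² - 4n + 6`. -/
theorem stmt_11 (n : ℕ) (hn : 5 ≤ n) :
    let w : List Bool := false ::
      ((List.replicate (n - 3) (true :: List.replicate (n - 2) false)).flatten
        ++ [true, false])
    w.length = n ^ 2 - 4 * n + 6 ∧
    (∃ p : ZMod n, ∀ q, run (hAut n) q w = p) ∧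
    (∀ v : List Bool, (∃ p : ZMod n, ∀ q, run (hAut n) q v = p) →
      n ^ 2 - 4 * n + 6 ≤ v.length) := by
  intro w
  haveI : NeZero n := ⟨by omega⟩
  refine ⟨?_, ⟨((2 : ℕ) : ZMod n), fun q => ?_⟩, fun v ⟨p, hp⟩ => ?_⟩
  · obtain ⟨k, rfl⟩ : ∃ k, n = k + 5 := ⟨n - 5, by omega⟩
    simp only [w, List.length_cons, List.length_append, List.length_flatten,
      List.map_replicate, List.length_replicate, List.sum_replicate, smul_eq_mul,
      show k + 5 - 3 = k + 2 by omega, show k + 5 - 2 = k + 3 by omega]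
    have h3 : (k + 2) * (k + 3 + 1) = k * k + 6 * k + 8 := by ring
    have h4 : (k + 5) ^ 2 = k * k + 10 * k + 25 := by ring
    rw [h3, h4]
    simp only [List.length_nil]
    omega
  · have hq : ((q.val : ℕ) : ZMod n) = q := ZMod.natCast_rightInverse q
    rw [← hq, run_eq_grun n hn _ q.val (ZMod.val_lt q), grun_w n hn q.val (ZMod.val_lt q)]
  · have hs : sRun (hAut n) Finset.univ v = {p} := by
      rw [sRun_eq_image]
      refine Finset.eq_singleton_iff_unique_mem.mpr ⟨?_, ?_⟩
      · exact Finset.mem_image.mpr ⟨p, Finset.mem_univ p, hp p⟩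
      · intro y hy
        obtain ⟨q, _, hq⟩ := Finset.mem_image.mp hy
        rw [← hq, hp q]
    exact lower_bound n hn v p hs
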